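/- Let G be the unweighted birth-death chain on ℕ (m ≡ 1, b ≡ 1) and G' the birth-death chain with m'(r) = r + 1 and b'(r) = (r+1)^{-2} (weight of edge {r, r+1}). Then k'₊(r) − k'₋(r) ≤ k₊(r) − k₋(r) for all r ≥ 0 (i.e. G' has a larger Laplacian of the distance function), yet m'(r) ≥ m(r) for all r, with strict inequality for all r ≥ 1. Hence a comparison of k₊ − k₋ alone does not imply a volume comparison. -/

import Mathlib

noncomputable def kp (b m : ℕ → ℝ) (r : ℕ) : ℝ := b r / m r

noncomputable def km (b m : ℕ → ℝ) : ℕ → ℝ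
  | 0 => 0
  | r + 1 => b r / m (r + 1)

/-- Ollivier sphere curvature of a birth-death chain, for `r ≥ 1`. -/
noncomputable def sk (b m : ℕ → ℝ) (r : ℕ) : ℝ :=
  (km b m r - kp b m r) - (km b m (r - 1) - kp b m (r - 1))

theorem stmt_8 :
    let m : ℕ → ℝ := fun _ => 1
    let b : ℕ → ℝ := fun _ => 1
    let m' : ℕ → ℝ := fun r => (r : ℝ) + 1
    let b' : ℕ → ℝ := fun r => ((r : ℝ) + 1) ^ (-2 : ℤ)
    (∀ r, kp b' m' r - km b' m' r ≤ kp b m r - km b m r) ∧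
    (∀ r, m' r ≥ m r) ∧ (∀ r ≥ 1, m' r > m r) := by
  refine ⟨?_, ?_, ?_⟩
  · intro r
    match r with
    | 0 =>
      simp [kp, km]
    | r + 1 =>
      have hr : (0:ℝ) < (r : ℝ) + 1 := by positivity
      have hr2 : (0:ℝ) < (r : ℝ) + 2 := by positivity
      simp only [kp, km]
      push_cast
      rw [zpow_neg, zpow_two, zpow_neg, zpow_two]
      have h1 : ((r:ℝ)+1) ≠ 0 := by positivity
      have h2 : ((r:ℝ)+2) ≠ 0 := by positivity
      rw [div_sub_div _ _ (by positivity) (by positivity)]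
      rw [div_le_iff₀ (by positivity)]
      field_simp
      nlinarith [sq_nonneg ((r:ℝ)), hr, hr2, mul_pos hr hr2]
  · intro r
    simp only [ge_iff_le, le_add_iff_nonneg_left]
    positivity
  · intro r hr
    have : (1:ℝ) ≤ (r:ℝ) := by exact_mod_cast hr
    simp only [gt_iff_lt]
    linarith
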